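/- Characterization of MINC-definability: a class 𝒦 of Φ-models with teams (Φ finite) is definable by a MINC-formula if and only if 𝒦 is closed under unions (if (K,T_i) ∈ 𝒦 for all i then (K, ⋃T_i) ∈ 𝒦), closed under team k-bisimulation for some k ∈ ℕ, and contains (K,∅) for every Kripke model K. -/

import Mathlib

namespace TeamSem

structure KripkeModel (Φ : Type) where
  W : Type
  R : W → W → Prop
  V : Φ → Set W

variable {Φ : Type}

/-- Image `R[T]` of a team under the accessibility relation. -/
def img (K : KripkeModel Φ) (T : Set K.W) : Set K.W := {v | ∃ w ∈ T, K.R w v}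

/-- Preimage `R⁻¹[S]`. -/
def preimg (K : KripkeModel Φ) (S : Set K.W) : Set K.W := {w | ∃ v ∈ S, K.R w v}

/-- `T[R]S` : `S ⊆ R[T]` and `T ⊆ R⁻¹[S]`. -/
def relStep (K : KripkeModel Φ) (T S : Set K.W) : Prop :=
  S ⊆ img K T ∧ T ⊆ preimg K S

/-- ML formulas in negation normal form. -/
inductive MLFormula (Φ : Type) where
  | atom : Φ → MLFormula Φ
  | natom : Φ → MLFormula Φ
  | and : MLFormula Φ → MLFormula Φ → MLFormula Φ
  | or : MLFormula Φ → MLFormula Φ → MLFormula Φ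
  | dia : MLFormula Φ → MLFormula Φ
  | box : MLFormula Φ → MLFormula Φ

/-- Lax team semantics for ML. -/
def mlSat (K : KripkeModel Φ) : MLFormula Φ → Set K.W → Prop
  | .atom p, T => T ⊆ K.V p
  | .natom p, T => T ∩ K.V p = ∅
  | .and φ ψ, T => mlSat K φ T ∧ mlSat K ψ T
  | .or φ ψ, T => ∃ T₁ T₂, T = T₁ ∪ T₂ ∧ mlSat K φ T₁ ∧ mlSat K ψ T₂
  | .dia φ, T => ∃ S, relStep K T S ∧ mlSat K φ S
  | .box φ, T => mlSat K φ (img K T)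

/-- Standard single-world Kripke semantics for ML. -/
def mlSatW (K : KripkeModel Φ) : MLFormula Φ → K.W → Prop
  | .atom p, w => w ∈ K.V p
  | .natom p, w => w ∉ K.V p
  | .and φ ψ, w => mlSatW K φ w ∧ mlSatW K ψ w
  | .or φ ψ, w => mlSatW K φ w ∨ mlSatW K ψ w
  | .dia φ, w => ∃ v, K.R w v ∧ mlSatW K φ v
  | .box φ, w => ∀ v, K.R w v → mlSatW K φ v

/-- Modal depth of an ML formula. -/
def mlMd : MLFormula Φ → ℕ
  | .atom _ => 0
  | .natom _ => 0
  | .and φ ψ => max (mlMd φ) (mlMd ψ)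
  | .or φ ψ => max (mlMd φ) (mlMd ψ)
  | .dia φ => mlMd φ + 1
  | .box φ => mlMd φ + 1

/-- `k`-bisimulation between pointed Kripke models. -/
def bisim (K K' : KripkeModel Φ) : ℕ → K.W → K'.W → Prop
  | 0, w, w' => ∀ p, w ∈ K.V p ↔ w' ∈ K'.V p
  | k + 1, w, w' => (∀ p, w ∈ K.V p ↔ w' ∈ K'.V p) ∧
      (∀ v, K.R w v → ∃ v', K'.R w' v' ∧ bisim K K' k v v') ∧
      (∀ v', K'.R w' v' → ∃ v, K.R w v ∧ bisim K K' k v v')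

/-- Team `k`-bisimilarity: domain and range totality. -/
def teamBisim (K K' : KripkeModel Φ) (k : ℕ) (T : Set K.W) (T' : Set K'.W) : Prop :=
  (∀ w ∈ T, ∃ w' ∈ T', bisim K K' k w w') ∧
  (∀ w' ∈ T', ∃ w ∈ T, bisim K K' k w w')

/-- Formulas of modal inclusion logic MINC. -/
inductive MINCFormula (Φ : Type) where
  | atom : Φ → MINCFormula Φ
  | natom : Φ → MINCFormula Φ
  | and : MINCFormula Φ → MINCFormula Φ → MINCFormula Φ
  | or : MINCFormula Φ → MINCFormula Φ → MINCFormula Φ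
  | dia : MINCFormula Φ → MINCFormula Φ
  | box : MINCFormula Φ → MINCFormula Φ
  | inc : List (MLFormula Φ) → List (MLFormula Φ) → MINCFormula Φ

/-- Team semantics for MINC. -/
def mincSat (K : KripkeModel Φ) : MINCFormula Φ → Set K.W → Prop
  | .atom p, T => T ⊆ K.V p
  | .natom p, T => T ∩ K.V p = ∅
  | .and φ ψ, T => mincSat K φ T ∧ mincSat K ψ T
  | .or φ ψ, T => ∃ T₁ T₂, T = T₁ ∪ T₂ ∧ mincSat K φ T₁ ∧ mincSat K ψ T₂
  | .dia φ, T => ∃ S, relStep K T S ∧ mincSat K φ S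
  | .box φ, T => mincSat K φ (img K T)
  | .inc φs ψs, T => ∀ w ∈ T, ∃ v ∈ T,
      ∀ pr ∈ φs.zip ψs, (mlSatW K pr.1 w ↔ mlSatW K pr.2 v)

/-- Modal depth of a MINC formula. -/
def mincMd : MINCFormula Φ → ℕ
  | .atom _ => 0
  | .natom _ => 0
  | .and φ ψ => max (mincMd φ) (mincMd ψ)
  | .or φ ψ => max (mincMd φ) (mincMd ψ)
  | .dia φ => mincMd φ + 1
  | .box φ => mincMd φ + 1
  | .inc φs ψs => ((φs ++ ψs).map mlMd).foldr max 0

/-- Formulas of ML(▽), modal logic with the nonemptiness operator. -/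
inductive NFormula (Φ : Type) where
  | atom : Φ → NFormula Φ
  | natom : Φ → NFormula Φ
  | and : NFormula Φ → NFormula Φ → NFormula Φ
  | or : NFormula Φ → NFormula Φ → NFormula Φ
  | dia : NFormula Φ → NFormula Φ
  | box : NFormula Φ → NFormula Φ
  | ne : NFormula Φ → NFormula Φ

/-- Team semantics for ML(▽). -/
def nSat (K : KripkeModel Φ) : NFormula Φ → Set K.W → Prop
  | .atom p, T => T ⊆ K.V p
  | .natom p, T => T ∩ K.V p = ∅
  | .and φ ψ, T => nSat K φ T ∧ nSat K ψ T
  | .or φ ψ, T => ∃ T₁ T₂, T = T₁ ∪ T₂ ∧ nSat K φ T₁ ∧ nSat K ψ T₂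
  | .dia φ, T => ∃ S, relStep K T S ∧ nSat K φ S
  | .box φ, T => nSat K φ (img K T)
  | .ne φ, T => T = ∅ ∨ ∃ S, S ⊆ T ∧ S.Nonempty ∧ nSat K φ S

/-- Modal depth of an ML(▽) formula. -/
def nMd : NFormula Φ → ℕ
  | .atom _ => 0
  | .natom _ => 0
  | .and φ ψ => max (nMd φ) (nMd ψ)
  | .or φ ψ => max (nMd φ) (nMd ψ)
  | .dia φ => nMd φ + 1
  | .box φ => nMd φ + 1
  | .ne φ => nMd φ

/-- Number of occurrences of ▽ in an ML(▽) formula. -/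
def nCount : NFormula Φ → ℕ
  | .atom _ => 0
  | .natom _ => 0
  | .and φ ψ => nCount φ + nCount ψ
  | .or φ ψ => nCount φ + nCount ψ
  | .dia φ => nCount φ
  | .box φ => nCount φ
  | .ne φ => nCount φ + 1

/-- Subformula occurrence at a position (path) in the syntax tree. -/
def subAt : NFormula Φ → List ℕ → Option (NFormula Φ)
  | φ, [] => some φ
  | .and θ _, 0 :: l => subAt θ l
  | .and _ η, 1 :: l => subAt η l
  | .or θ _, 0 :: l => subAt θ l
  | .or _ η, 1 :: l => subAt η l
  | .dia θ, 0 :: l => subAt θ l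
  | .box θ, 0 :: l => subAt θ l
  | .ne θ, 0 :: l => subAt θ l
  | _, _ => none

/-- `F` is a winning-strategy labeling of the syntax tree of `φ` for `(K,T)`. -/
def IsWinning (K : KripkeModel Φ) (φ : NFormula Φ) (T : Set K.W)
    (F : List ℕ → Set K.W) : Prop :=
  F [] = T ∧
  ∀ π ψ, subAt φ π = some ψ →
    match ψ with
    | .atom p => F π ⊆ K.V p
    | .natom p => F π ∩ K.V p = ∅
    | .and _ _ => F π = F (π ++ [0]) ∧ F π = F (π ++ [1])
    | .or _ _ => F π = F (π ++ [0]) ∪ F (π ++ [1])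
    | .dia _ => relStep K (F π) (F (π ++ [0]))
    | .box _ => F (π ++ [0]) = img K (F π)
    | .ne _ => F (π ++ [0]) ⊆ F π ∧ (F π ≠ ∅ → F (π ++ [0]) ≠ ∅)


section Aux
variable {Φ : Type}

lemma img_mono {K : KripkeModel Φ} {T T' : Set K.W} (h : T ⊆ T') : img K T ⊆ img K T' :=
  fun v ⟨w, hw, hr⟩ => ⟨w, h hw, hr⟩

lemma preimg_mono {K : KripkeModel Φ} {S S' : Set K.W} (h : S ⊆ S') :
    preimg K S ⊆ preimg K S' := fun w ⟨v, hv, hr⟩ => ⟨v, h hv, hr⟩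

lemma img_empty (K : KripkeModel Φ) : img K (∅ : Set K.W) = ∅ := by
  ext v; simp [img]

lemma img_union (K : KripkeModel Φ) (T S : Set K.W) :
    img K (T ∪ S) = img K T ∪ img K S := by
  ext v
  constructor
  · rintro ⟨w, hw | hw, hr⟩
    · exact Or.inl ⟨w, hw, hr⟩
    · exact Or.inr ⟨w, hw, hr⟩
  · rintro (⟨w, hw, hr⟩ | ⟨w, hw, hr⟩)
    · exact ⟨w, Or.inl hw, hr⟩
    · exact ⟨w, Or.inr hw, hr⟩

lemma img_iUnion (K : KripkeModel Φ) {I : Type} (T : I → Set K.W) :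
    img K (⋃ i, T i) = ⋃ i, img K (T i) := by
  ext v; simp [img]; tauto

lemma mincSat_empty (K : KripkeModel Φ) (φ : MINCFormula Φ) :
    mincSat K φ (∅ : Set K.W) := by
  induction φ with
  | atom p => simp [mincSat]
  | natom p => simp [mincSat]
  | and φ ψ ihφ ihψ => exact ⟨ihφ, ihψ⟩
  | or φ ψ ihφ ihψ => exact ⟨∅, ∅, by simp, ihφ, ihψ⟩
  | dia φ ih =>
      refine ⟨∅, ⟨?_, ?_⟩, ih⟩ <;> simp [img, preimg]
  | box φ ih =>
      show mincSat K φ (img K ∅)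
      rw [img_empty]; exact ih
  | inc φs ψs => intro w hw; simp at hw

lemma mincSat_iUnion {K : KripkeModel Φ} {I : Type} (φ : MINCFormula Φ) :
    ∀ T : I → Set K.W, (∀ i, mincSat K φ (T i)) → mincSat K φ (⋃ i, T i) := by
  induction φ with
  | atom p => intro T h; exact Set.iUnion_subset h
  | natom p =>
      intro T h
      show (⋃ i, T i) ∩ K.V p = ∅
      rw [Set.iUnion_inter]
      exact Set.iUnion_eq_empty.2 h
  | and φ ψ ihφ ihψ => intro T h; exact ⟨ihφ T fun i => (h i).1, ihψ T fun i => (h i).2⟩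
  | or φ ψ ihφ ihψ =>
      intro T h
      choose T₁ T₂ hT h1 h2 using h
      refine ⟨⋃ i, T₁ i, ⋃ i, T₂ i, ?_, ihφ _ h1, ihψ _ h2⟩
      rw [← Set.iUnion_union_distrib]
      exact Set.iUnion_congr hT
  | dia φ ih =>
      intro T h
      choose S hS hsat using h
      refine ⟨⋃ i, S i, ⟨?_, ?_⟩, ih _ hsat⟩
      · exact Set.iUnion_subset fun i =>
          (hS i).1.trans (img_mono (Set.subset_iUnion T i))
      · exact Set.iUnion_subset fun i =>
          (hS i).2.trans (preimg_mono (Set.subset_iUnion S i))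
  | box φ ih =>
      intro T h
      show mincSat K φ (img K (⋃ i, T i))
      rw [img_iUnion]
      exact ih _ h
  | inc φs ψs =>
      intro T h w hw
      obtain ⟨i, hi⟩ := Set.mem_iUnion.1 hw
      obtain ⟨v, hv, hvagree⟩ := h i w hi
      exact ⟨v, Set.mem_iUnion.2 ⟨i, hv⟩, hvagree⟩

lemma bisim_atoms {K K' : KripkeModel Φ} :
    ∀ {k : ℕ} {w : K.W} {w' : K'.W}, bisim K K' k w w' → ∀ p, w ∈ K.V p ↔ w' ∈ K'.V p
  | 0, _, _, h => h
  | _ + 1, _, _, h => h.1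

lemma mlSatW_bisim {K K' : KripkeModel Φ} (ψ : MLFormula Φ) :
    ∀ {k : ℕ} {w : K.W} {w' : K'.W}, mlMd ψ ≤ k → bisim K K' k w w' →
      (mlSatW K ψ w ↔ mlSatW K' ψ w') := by
  induction ψ with
  | atom p => intro k w w' _ hb; exact bisim_atoms hb p
  | natom p => intro k w w' _ hb; exact not_congr (bisim_atoms hb p)
  | and φ χ ihφ ihχ =>
      intro k w w' hd hb
      exact and_congr (ihφ (le_trans (le_max_left _ _) hd) hb)
        (ihχ (le_trans (le_max_right _ _) hd) hb)
  | or φ χ ihφ ihχ =>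
      intro k w w' hd hb
      exact or_congr (ihφ (le_trans (le_max_left _ _) hd) hb)
        (ihχ (le_trans (le_max_right _ _) hd) hb)
  | dia φ ih =>
      intro k w w' hd hb
      simp only [mlMd] at hd
      obtain ⟨j, rfl⟩ : ∃ j, k = j + 1 := ⟨k - 1, by omega⟩
      obtain ⟨-, hf, hback⟩ := hb
      constructor
      · rintro ⟨v, hr, hv⟩
        obtain ⟨v', hr', hb'⟩ := hf v hr
        exact ⟨v', hr', (ih (by omega : mlMd φ ≤ j) hb').1 hv⟩
      · rintro ⟨v', hr', hv'⟩
        obtain ⟨v, hr, hb'⟩ := hback v' hr'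
        exact ⟨v, hr, (ih (by omega : mlMd φ ≤ j) hb').2 hv'⟩
  | box φ ih =>
      intro k w w' hd hb
      simp only [mlMd] at hd
      obtain ⟨j, rfl⟩ : ∃ j, k = j + 1 := ⟨k - 1, by omega⟩
      obtain ⟨-, hf, hback⟩ := hb
      constructor
      · rintro h v' hr'
        obtain ⟨v, hr, hb'⟩ := hback v' hr'
        exact (ih (by omega : mlMd φ ≤ j) hb').1 (h v hr)
      · rintro h v hr
        obtain ⟨v', hr', hb'⟩ := hf v hr
        exact (ih (by omega : mlMd φ ≤ j) hb').2 (h v' hr')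

lemma foldr_max_le {l : List ℕ} {a : ℕ} (h : a ∈ l) : a ≤ l.foldr max 0 := by
  induction l with
  | nil => simp at h
  | cons b l ih =>
      rcases List.mem_cons.1 h with rfl | h
      · exact le_max_left _ _
      · exact le_trans (ih h) (le_max_right _ _)

end Aux
section Aux2
variable {Φ : Type}

lemma mincSat_teamBisim (φ : MINCFormula Φ) :
    ∀ {k : ℕ} {K K' : KripkeModel Φ} {T : Set K.W} {T' : Set K'.W},
      mincMd φ ≤ k → mincSat K φ T → teamBisim K K' k T T' → mincSat K' φ T' := by
  induction φ with
  | atom p =>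
      intro k K K' T T' _ hsat hb w' hw'
      obtain ⟨w, hw, hbw⟩ := hb.2 w' hw'
      exact (bisim_atoms hbw p).1 (hsat hw)
  | natom p =>
      intro k K K' T T' _ hsat hb
      ext w'
      simp only [Set.mem_inter_iff, Set.mem_empty_iff_false, iff_false, not_and]
      intro hw' hv'
      obtain ⟨w, hw, hbw⟩ := hb.2 w' hw'
      have : w ∈ T ∩ K.V p := ⟨hw, (bisim_atoms hbw p).2 hv'⟩
      rw [hsat] at this
      exact this
  | and φ ψ ihφ ihψ =>
      intro k K K' T T' hd hsat hb
      simp only [mincMd, max_le_iff] at hd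
      exact ⟨ihφ hd.1 hsat.1 hb, ihψ hd.2 hsat.2 hb⟩
  | or φ ψ ihφ ihψ =>
      intro k K K' T T' hd hsat hb
      simp only [mincMd, max_le_iff] at hd
      obtain ⟨T₁, T₂, rfl, h1, h2⟩ := hsat
      refine ⟨{w' ∈ T' | ∃ w ∈ T₁, bisim K K' k w w'},
              {w' ∈ T' | ∃ w ∈ T₂, bisim K K' k w w'}, ?_, ?_, ?_⟩
      · ext w'
        simp only [Set.mem_union, Set.mem_setOf_eq]
        constructor
        · intro hw'
          obtain ⟨w, hw, hbw⟩ := hb.2 w' hw'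
          rcases hw with hw | hw
          · exact Or.inl ⟨hw', w, hw, hbw⟩
          · exact Or.inr ⟨hw', w, hw, hbw⟩
        · rintro (⟨h, -⟩ | ⟨h, -⟩) <;> exact h
      · refine ihφ hd.1 h1 ⟨?_, ?_⟩
        · intro w hw
          obtain ⟨w', hw', hbw⟩ := hb.1 w (Or.inl hw)
          exact ⟨w', ⟨hw', w, hw, hbw⟩, hbw⟩
        · rintro w' ⟨-, w, hw, hbw⟩
          exact ⟨w, hw, hbw⟩
      · refine ihψ hd.2 h2 ⟨?_, ?_⟩
        · intro w hw
          obtain ⟨w', hw', hbw⟩ := hb.1 w (Or.inr hw)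
          exact ⟨w', ⟨hw', w, hw, hbw⟩, hbw⟩
        · rintro w' ⟨-, w, hw, hbw⟩
          exact ⟨w, hw, hbw⟩
  | dia φ ih =>
      intro k K K' T T' hd hsat hb
      simp only [mincMd] at hd
      obtain ⟨j, rfl⟩ : ∃ j, k = j + 1 := ⟨k - 1, by omega⟩
      obtain ⟨S, ⟨hS1, hS2⟩, hsatS⟩ := hsat
      refine ⟨{v' | v' ∈ img K' T' ∧ ∃ v ∈ S, bisim K K' j v v'}, ⟨?_, ?_⟩, ?_⟩
      · intro v' hv'; exact hv'.1
      · intro w' hw'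
        obtain ⟨w, hw, hbw⟩ := hb.2 w' hw'
        obtain ⟨v, hv, hr⟩ := hS2 hw
        obtain ⟨v', hr', hbv⟩ := hbw.2.1 v hr
        exact ⟨v', ⟨⟨w', hw', hr'⟩, v, hv, hbv⟩, hr'⟩
      · refine ih (k := j) (by omega) hsatS ⟨?_, ?_⟩
        · intro v hv
          obtain ⟨w, hw, hr⟩ := hS1 hv
          obtain ⟨w', hw', hbw⟩ := hb.1 w hw
          obtain ⟨v', hr', hbv⟩ := hbw.2.1 v hr
          exact ⟨v', ⟨⟨w', hw', hr'⟩, v, hv, hbv⟩, hbv⟩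
        · rintro v' ⟨-, v, hv, hbv⟩
          exact ⟨v, hv, hbv⟩
  | box φ ih =>
      intro k K K' T T' hd hsat hb
      simp only [mincMd] at hd
      obtain ⟨j, rfl⟩ : ∃ j, k = j + 1 := ⟨k - 1, by omega⟩
      show mincSat K' φ (img K' T')
      refine ih (k := j) (by omega) hsat ⟨?_, ?_⟩
      · rintro v ⟨w, hw, hr⟩
        obtain ⟨w', hw', hbw⟩ := hb.1 w hw
        obtain ⟨v', hr', hbv⟩ := hbw.2.1 v hr
        exact ⟨v', ⟨w', hw', hr'⟩, hbv⟩
      · rintro v' ⟨w', hw', hr'⟩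
        obtain ⟨w, hw, hbw⟩ := hb.2 w' hw'
        obtain ⟨v, hr, hbv⟩ := hbw.2.2 v' hr'
        exact ⟨v, ⟨w, hw, hr⟩, hbv⟩
  | inc φs ψs =>
      intro k K K' T T' hd hsat hb w' hw'
      obtain ⟨w, hw, hbw⟩ := hb.2 w' hw'
      obtain ⟨v, hv, hagree⟩ := hsat w hw
      obtain ⟨v', hv', hbv⟩ := hb.1 v hv
      refine ⟨v', hv', ?_⟩
      intro pr hpr
      obtain ⟨h1, h2⟩ := List.of_mem_zip hpr
      have d1 : mlMd pr.1 ≤ k := by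
        refine le_trans (foldr_max_le ?_) hd
        exact List.mem_map.2 ⟨pr.1, List.mem_append.2 (Or.inl h1), rfl⟩
      have d2 : mlMd pr.2 ≤ k := by
        refine le_trans (foldr_max_le ?_) hd
        exact List.mem_map.2 ⟨pr.2, List.mem_append.2 (Or.inr h2), rfl⟩
      calc mlSatW K' pr.1 w' ↔ mlSatW K pr.1 w := (mlSatW_bisim pr.1 d1 hbw).symm
        _ ↔ mlSatW K pr.2 v := hagree pr hpr
        _ ↔ mlSatW K' pr.2 v' := mlSatW_bisim pr.2 d2 hbv

end Aux2
section Types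
open Classical
variable {Φ : Type}

def ModType (Φ : Type) : ℕ → Type
  | 0 => Set Φ
  | k + 1 => Set Φ × Set (ModType Φ k)

instance instFiniteModType [Finite Φ] (k : ℕ) : Finite (ModType Φ k) := by
  induction k with
  | zero => unfold ModType; infer_instance
  | succ k ih => haveI := ih; unfold ModType; infer_instance

def ty (K : KripkeModel Φ) : (k : ℕ) → K.W → ModType Φ k
  | 0, w => {p | w ∈ K.V p}
  | k + 1, w => ({p | w ∈ K.V p}, {τ | ∃ v, K.R w v ∧ ty K k v = τ})

lemma ty_eq_bisim {K K' : KripkeModel Φ} :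
    ∀ (k : ℕ) (w : K.W) (w' : K'.W), ty K k w = ty K' k w' → bisim K K' k w w'
  | 0, w, w', h => by
      intro p
      have := Set.ext_iff.1 h p
      exact this
  | k + 1, w, w', h => by
      have h1 : ({p | w ∈ K.V p} : Set Φ) = {p | w' ∈ K'.V p} := congrArg Prod.fst h
      have h2 : {τ | ∃ v, K.R w v ∧ ty K k v = τ} =
          {τ | ∃ v', K'.R w' v' ∧ ty K' k v' = τ} := congrArg Prod.snd h
      refine ⟨fun p => by simpa using Set.ext_iff.1 h1 p, ?_, ?_⟩
      · intro v hv
        have : ty K k v ∈ {τ | ∃ v', K'.R w' v' ∧ ty K' k v' = τ} := by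
          rw [← h2]; exact ⟨v, hv, rfl⟩
        obtain ⟨v', hr', he⟩ := this
        exact ⟨v', hr', ty_eq_bisim k v v' he.symm⟩
      · intro v' hv'
        have : ty K' k v' ∈ {τ | ∃ v, K.R w v ∧ ty K k v = τ} := by
          rw [h2]; exact ⟨v', hv', rfl⟩
        obtain ⟨v, hr, he⟩ := this
        exact ⟨v, hr, ty_eq_bisim k v v' he⟩

noncomputable def listOf {α : Type*} [Finite α] (s : Set α) : List α :=
  s.toFinite.toFinset.toList

lemma mem_listOf {α : Type*} [Finite α] {s : Set α} {a : α} : a ∈ listOf s ↔ a ∈ s := by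
  simp [listOf]

variable [Fintype Φ] [Nonempty Φ]

noncomputable def pp : Φ := Classical.arbitrary Φ

noncomputable def mlTop : MLFormula Φ := .or (.atom pp) (.natom pp)

noncomputable def mlBot : MLFormula Φ := .and (.atom pp) (.natom pp)

noncomputable def bigAndML (l : List (MLFormula Φ)) : MLFormula Φ := l.foldr .and mlTop

noncomputable def bigOrML (l : List (MLFormula Φ)) : MLFormula Φ := l.foldr .or mlBot

lemma mlSatW_top {K : KripkeModel Φ} (w : K.W) : mlSatW K mlTop w := by
  simp only [mlTop, mlSatW]
  exact Classical.em _

lemma mlSatW_bot {K : KripkeModel Φ} (w : K.W) : ¬ mlSatW K mlBot w := by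
  simp only [mlBot, mlSatW]
  tauto

lemma mlSatW_bigAnd {K : KripkeModel Φ} {l : List (MLFormula Φ)} {w : K.W} :
    mlSatW K (bigAndML l) w ↔ ∀ ψ ∈ l, mlSatW K ψ w := by
  induction l with
  | nil => simpa [bigAndML] using mlSatW_top w
  | cons a l ih =>
      show mlSatW K (.and a (bigAndML l)) w ↔ _
      rw [show mlSatW K (.and a (bigAndML l)) w = (mlSatW K a w ∧ mlSatW K (bigAndML l) w) from rfl]
      simp [ih]

lemma mlSatW_bigOr {K : KripkeModel Φ} {l : List (MLFormula Φ)} {w : K.W} :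
    mlSatW K (bigOrML l) w ↔ ∃ ψ ∈ l, mlSatW K ψ w := by
  induction l with
  | nil => simpa [bigOrML] using mlSatW_bot w
  | cons a l ih =>
      show mlSatW K (.or a (bigOrML l)) w ↔ _
      rw [show mlSatW K (.or a (bigOrML l)) w = (mlSatW K a w ∨ mlSatW K (bigOrML l) w) from rfl]
      simp [ih]

noncomputable def chi0 (A : Set Φ) : MLFormula Φ :=
  bigAndML (Finset.univ.toList.map fun p => if p ∈ A then .atom p else .natom p)

lemma mlSatW_chi0 {K : KripkeModel Φ} {A : Set Φ} {w : K.W} :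
    mlSatW K (chi0 A) w ↔ {p | w ∈ K.V p} = A := by
  rw [chi0, mlSatW_bigAnd]
  constructor
  · intro h
    ext p
    have := h _ (List.mem_map.2 ⟨p, by simp, rfl⟩)
    by_cases hp : p ∈ A
    · rw [if_pos hp] at this
      simpa [hp, mlSatW] using (this : w ∈ K.V p)
    · rw [if_neg hp] at this
      simp only [Set.mem_setOf_eq, hp, iff_false]
      exact (this : w ∉ K.V p)
  · rintro rfl ψ hψ
    obtain ⟨p, -, rfl⟩ := List.mem_map.1 hψ
    by_cases hp : w ∈ K.V p
    · rw [if_pos (by simpa using hp)]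
      exact hp
    · rw [if_neg (by simpa using hp)]
      exact hp

noncomputable def chi : (k : ℕ) → ModType Φ k → MLFormula Φ
  | 0, A => chi0 A
  | k + 1, τ => .and (chi0 τ.1)
      (.and (bigAndML ((listOf τ.2).map fun σ => .dia (chi k σ)))
            (.box (bigOrML ((listOf τ.2).map fun σ => chi k σ))))

lemma mlSatW_chi {K : KripkeModel Φ} :
    ∀ (k : ℕ) (τ : ModType Φ k) (w : K.W), mlSatW K (chi k τ) w ↔ ty K k w = τ
  | 0, A, w => mlSatW_chi0
  | k + 1, τ, w => by
      show mlSatW K (.and _ (.and _ _)) w ↔ _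
      rw [show ∀ a b : MLFormula Φ, mlSatW K (.and a b) w = (mlSatW K a w ∧ mlSatW K b w)
        from fun _ _ => rfl]
      rw [show ∀ a b : MLFormula Φ, mlSatW K (.and a b) w = (mlSatW K a w ∧ mlSatW K b w)
        from fun _ _ => rfl]
      rw [mlSatW_chi0, mlSatW_bigAnd]
      constructor
      · rintro ⟨h1, h2, h3⟩
        have hsub1 : τ.2 ⊆ {σ | ∃ v, K.R w v ∧ ty K k v = σ} := by
          intro σ hσ
          have := h2 _ (List.mem_map.2 ⟨σ, mem_listOf.2 hσ, rfl⟩)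
          obtain ⟨v, hr, hv⟩ := this
          exact ⟨v, hr, (mlSatW_chi k σ v).1 hv⟩
        have hsub2 : {σ | ∃ v, K.R w v ∧ ty K k v = σ} ⊆ τ.2 := by
          rintro σ ⟨v, hr, rfl⟩
          have := h3 v hr
          rw [mlSatW_bigOr] at this
          obtain ⟨ψ, hψ, hv⟩ := this
          obtain ⟨σ', hσ', rfl⟩ := List.mem_map.1 hψ
          rw [mlSatW_chi k σ' v] at hv
          rw [hv]
          exact mem_listOf.1 hσ'
        have : ty K (k+1) w = (({p | w ∈ K.V p} : Set Φ),
            ({σ | ∃ v, K.R w v ∧ ty K k v = σ} : Set (ModType Φ k))) := rfl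
        rw [this, h1, Set.Subset.antisymm hsub2 hsub1]
        exact Prod.mk.eta
      · intro h
        have h1 : ({p | w ∈ K.V p} : Set Φ) = τ.1 := congrArg Prod.fst h
        have h2 : ({σ | ∃ v, K.R w v ∧ ty K k v = σ} : Set (ModType Φ k)) = τ.2 :=
          congrArg Prod.snd h
        refine ⟨h1, ?_, ?_⟩
        · intro ψ hψ
          obtain ⟨σ, hσ, rfl⟩ := List.mem_map.1 hψ
          have : σ ∈ ({σ | ∃ v, K.R w v ∧ ty K k v = σ} : Set (ModType Φ k)) := by
            rw [h2]; exact mem_listOf.1 hσ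
          obtain ⟨v, hr, hv⟩ := this
          exact ⟨v, hr, (mlSatW_chi k σ v).2 hv⟩
        · intro v hr
          rw [mlSatW_bigOr]
          refine ⟨chi k (ty K k v), List.mem_map.2 ⟨ty K k v, ?_, rfl⟩,
            (mlSatW_chi k _ v).2 rfl⟩
          rw [mem_listOf, ← h2]
          exact ⟨v, hr, rfl⟩

end Types
section Emb
variable {Φ : Type}

def emb : MLFormula Φ → MINCFormula Φ
  | .atom p => .atom p
  | .natom p => .natom p
  | .and φ ψ => .and (emb φ) (emb ψ)
  | .or φ ψ => .or (emb φ) (emb ψ)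
  | .dia φ => .dia (emb φ)
  | .box φ => .box (emb φ)

lemma mincSat_emb {K : KripkeModel Φ} (ψ : MLFormula Φ) :
    ∀ T : Set K.W, mincSat K (emb ψ) T ↔ ∀ w ∈ T, mlSatW K ψ w := by
  induction ψ with
  | atom p => intro T; exact Iff.rfl
  | natom p =>
      intro T
      show T ∩ K.V p = ∅ ↔ _
      rw [Set.eq_empty_iff_forall_notMem]
      constructor
      · intro h w hw hv; exact h w ⟨hw, hv⟩
      · rintro h w ⟨hw, hv⟩; exact h w hw hv
  | and φ χ ihφ ihχ =>
      intro T
      show (mincSat K (emb φ) T ∧ mincSat K (emb χ) T) ↔ _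
      rw [ihφ, ihχ]
      constructor
      · rintro ⟨h1, h2⟩ w hw; exact ⟨h1 w hw, h2 w hw⟩
      · intro h; exact ⟨fun w hw => (h w hw).1, fun w hw => (h w hw).2⟩
  | or φ χ ihφ ihχ =>
      intro T
      constructor
      · rintro ⟨T₁, T₂, rfl, h1, h2⟩ w hw
        rcases hw with hw | hw
        · exact Or.inl ((ihφ T₁).1 h1 w hw)
        · exact Or.inr ((ihχ T₂).1 h2 w hw)
      · intro h
        refine ⟨{w ∈ T | mlSatW K φ w}, {w ∈ T | mlSatW K χ w}, ?_,
          (ihφ _).2 fun w hw => hw.2, (ihχ _).2 fun w hw => hw.2⟩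
        ext w
        simp only [Set.mem_union, Set.mem_setOf_eq]
        constructor
        · intro hw
          rcases h w hw with h' | h'
          · exact Or.inl ⟨hw, h'⟩
          · exact Or.inr ⟨hw, h'⟩
        · rintro (⟨hw, -⟩ | ⟨hw, -⟩) <;> exact hw
  | dia φ ih =>
      intro T
      constructor
      · rintro ⟨S, ⟨hS1, hS2⟩, hsat⟩ w hw
        obtain ⟨v, hv, hr⟩ := hS2 hw
        exact ⟨v, hr, (ih S).1 hsat v hv⟩
      · intro h
        refine ⟨{v | mlSatW K φ v ∧ ∃ w ∈ T, K.R w v}, ⟨?_, ?_⟩, ?_⟩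
        · rintro v ⟨-, hv⟩; exact hv
        · intro w hw
          obtain ⟨v, hr, hv⟩ := h w hw
          exact ⟨v, ⟨hv, w, hw, hr⟩, hr⟩
        · exact (ih _).2 fun v hv => hv.1
  | box φ ih =>
      intro T
      show mincSat K (emb φ) (img K T) ↔ _
      rw [ih]
      constructor
      · rintro h w hw v hr
        exact h v ⟨w, hw, hr⟩
      · rintro h v ⟨w, hw, hr⟩
        exact h w hw v hr

variable [Fintype Φ] [Nonempty Φ]

noncomputable def topM : MINCFormula Φ := emb mlTop
noncomputable def botM : MINCFormula Φ := emb mlBot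
noncomputable def bigAndM (l : List (MINCFormula Φ)) : MINCFormula Φ := l.foldr .and topM
noncomputable def bigOrM (l : List (MINCFormula Φ)) : MINCFormula Φ := l.foldr .or botM

lemma mincSat_topM {K : KripkeModel Φ} (T : Set K.W) : mincSat K topM T :=
  (mincSat_emb _ T).2 fun w _ => mlSatW_top w

lemma mincSat_botM {K : KripkeModel Φ} {T : Set K.W} : mincSat K botM T ↔ T = ∅ := by
  rw [botM, mincSat_emb, Set.eq_empty_iff_forall_notMem]
  exact ⟨fun h w hw => mlSatW_bot w (h w hw), fun h w hw => absurd hw (h w)⟩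

lemma mincSat_bigAndM {K : KripkeModel Φ} {l : List (MINCFormula Φ)} {T : Set K.W} :
    mincSat K (bigAndM l) T ↔ ∀ a ∈ l, mincSat K a T := by
  induction l with
  | nil => simpa [bigAndM] using mincSat_topM T
  | cons a l ih =>
      show (mincSat K a T ∧ mincSat K (bigAndM l) T) ↔ _
      rw [ih]
      simp

lemma mincSat_bigOrM {K : KripkeModel Φ} {l : List (MINCFormula Φ)} {T : Set K.W} :
    mincSat K (bigOrM l) T ↔
      ∃ g : Fin l.length → Set K.W, T = (⋃ i, g i) ∧ ∀ i, mincSat K (l.get i) (g i) := by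
  induction l generalizing T with
  | nil =>
      rw [show bigOrM ([] : List (MINCFormula Φ)) = botM from rfl, mincSat_botM]
      constructor
      · rintro rfl
        exact ⟨fun i => ∅, by simp, fun i => i.elim0⟩
      · rintro ⟨g, rfl, -⟩
        simp
  | cons a l ih =>
      show (∃ T₁ T₂, T = T₁ ∪ T₂ ∧ mincSat K a T₁ ∧ mincSat K (bigOrM l) T₂) ↔ _
      constructor
      · rintro ⟨T₁, T₂, rfl, h1, h2⟩
        obtain ⟨g, rfl, hg⟩ := ih.1 h2
        refine ⟨Fin.cons T₁ g, ?_, ?_⟩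
        · ext x
          constructor
          · rintro (hx | hx)
            · exact Set.mem_iUnion.2 ⟨⟨0, Nat.succ_pos _⟩, hx⟩
            · obtain ⟨i, hi⟩ := Set.mem_iUnion.1 hx
              exact Set.mem_iUnion.2 ⟨i.succ, by simpa using hi⟩
          · intro hx
            obtain ⟨i, hi⟩ := Set.mem_iUnion.1 hx
            refine Fin.cases ?_ ?_ i hi
            · intro h; exact Or.inl h
            · intro j hj
              exact Or.inr (Set.mem_iUnion.2 ⟨j, by simpa using hj⟩)
        · intro i
          refine Fin.cases ?_ ?_ i
          · exact h1
          · intro j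
            simpa using hg j
      · rintro ⟨g, rfl, hg⟩
        refine ⟨g ⟨0, Nat.succ_pos _⟩, ⋃ j : Fin l.length, g j.succ, ?_,
          hg ⟨0, Nat.succ_pos _⟩, ih.2 ⟨fun j => g j.succ, rfl, fun j => by simpa using hg j.succ⟩⟩
        ext x
        constructor
        · intro hx
          obtain ⟨i, hi⟩ := Set.mem_iUnion.1 hx
          refine Fin.cases ?_ ?_ i hi
          · intro h; exact Or.inl h
          · intro j hj
            exact Or.inr (Set.mem_iUnion.2 ⟨j, hj⟩)
        · rintro (hx | hx)
          · exact Set.mem_iUnion.2 ⟨⟨0, Nat.succ_pos _⟩, hx⟩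
          · obtain ⟨j, hj⟩ := Set.mem_iUnion.1 hx
            exact Set.mem_iUnion.2 ⟨j.succ, hj⟩

lemma mincSat_bigOrM_of_mem {K : KripkeModel Φ} {l : List (MINCFormula Φ)} {a : MINCFormula Φ}
    {T : Set K.W} (ha : a ∈ l) (h : mincSat K a T) : mincSat K (bigOrM l) T := by
  induction l with
  | nil => simp at ha
  | cons b l ih =>
      rcases List.mem_cons.1 ha with rfl | ha
      · exact ⟨T, ∅, by simp, h, mincSat_empty K _⟩
      · exact ⟨∅, T, by simp, mincSat_empty K _, ih ha⟩

end Emb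
section Theta
variable {Φ : Type}

def tyset (K : KripkeModel Φ) (k : ℕ) (T : Set K.W) : Set (ModType Φ k) := ty K k '' T

lemma tyset_empty (K : KripkeModel Φ) (k : ℕ) : tyset K k (∅ : Set K.W) = ∅ := by
  simp [tyset]

lemma tyset_iUnion (K : KripkeModel Φ) (k : ℕ) {I : Type} (T : I → Set K.W) :
    tyset K k (⋃ i, T i) = ⋃ i, tyset K k (T i) := by
  simp [tyset, Set.image_iUnion]

lemma teamBisim_of_tyset_eq {K K' : KripkeModel Φ} {k : ℕ} {T : Set K.W} {T' : Set K'.W}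
    (h : tyset K k T = tyset K' k T') : teamBisim K K' k T T' := by
  constructor
  · intro w hw
    have : ty K k w ∈ tyset K' k T' := h ▸ ⟨w, hw, rfl⟩
    obtain ⟨w', hw', he⟩ := this
    exact ⟨w', hw', ty_eq_bisim k w w' he.symm⟩
  · intro w' hw'
    have : ty K' k w' ∈ tyset K k T := h.symm ▸ ⟨w', hw', rfl⟩
    obtain ⟨w, hw, he⟩ := this
    exact ⟨w, hw, ty_eq_bisim k w w' he⟩

variable [Fintype Φ] [Nonempty Φ]

noncomputable def theta (k : ℕ) (S : Set (ModType Φ k)) : MINCFormula Φ :=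
  .and (bigOrM ((listOf S).map fun τ => emb (chi k τ)))
       (bigAndM ((listOf S).map fun τ => .inc [mlTop] [chi k τ]))

lemma mincSat_theta_aux1 {K : KripkeModel Φ} {k : ℕ} {S : Set (ModType Φ k)} {T : Set K.W} :
    mincSat K (bigOrM ((listOf S).map fun τ => emb (chi k τ))) T ↔
      ∀ w ∈ T, ty K k w ∈ S := by
  rw [mincSat_bigOrM]
  constructor
  · rintro ⟨g, rfl, hg⟩ w hw
    obtain ⟨i, hi⟩ := Set.mem_iUnion.1 hw
    have := hg i
    rw [List.get_eq_getElem, List.getElem_map] at this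
    rw [mincSat_emb] at this
    have hty := (mlSatW_chi k _ w).1 (this w hi)
    rw [hty]
    exact mem_listOf.1 (List.getElem_mem _)
  · intro h
    refine ⟨fun i => {w ∈ T | ty K k w = (listOf S).get (Fin.cast (by simp) i)}, ?_, ?_⟩
    · ext w
      simp only [Set.mem_iUnion, Set.mem_setOf_eq]
      constructor
      · intro hw
        have : ty K k w ∈ listOf S := mem_listOf.2 (h w hw)
        obtain ⟨n, hn⟩ := List.mem_iff_get.1 this
        exact ⟨Fin.cast (by simp) n, hw, by simpa using hn.symm⟩
      · rintro ⟨i, hw, -⟩; exact hw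
    · intro i
      rw [List.get_eq_getElem, List.getElem_map, mincSat_emb]
      rintro w ⟨-, hw⟩
      exact (mlSatW_chi k _ w).2 hw

lemma mincSat_theta_aux2 {K : KripkeModel Φ} {k : ℕ} {S : Set (ModType Φ k)} {T : Set K.W} :
    mincSat K (bigAndM ((listOf S).map fun τ => MINCFormula.inc [mlTop] [chi k τ])) T ↔
      ∀ τ ∈ S, ∀ w ∈ T, ∃ v ∈ T, ty K k v = τ := by
  rw [mincSat_bigAndM]
  constructor
  · intro h τ hτ w hw
    have := h _ (List.mem_map.2 ⟨τ, mem_listOf.2 hτ, rfl⟩) w hw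
    obtain ⟨v, hv, hvag⟩ := this
    have := hvag (mlTop, chi k τ) (by simp)
    refine ⟨v, hv, (mlSatW_chi k τ v).1 (this.1 (mlSatW_top w))⟩
  · intro h a ha
    obtain ⟨τ, hτ, rfl⟩ := List.mem_map.1 ha
    intro w hw
    obtain ⟨v, hv, hty⟩ := h τ (mem_listOf.1 hτ) w hw
    refine ⟨v, hv, ?_⟩
    rintro pr hpr
    simp only [List.zip_cons_cons, List.zip_nil_right, List.mem_singleton] at hpr
    subst hpr
    exact ⟨fun _ => (mlSatW_chi k τ v).2 hty, fun _ => mlSatW_top w⟩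

lemma mincSat_theta {K : KripkeModel Φ} {k : ℕ} {S : Set (ModType Φ k)} {T : Set K.W} :
    mincSat K (theta k S) T ↔ (T = ∅ ∨ tyset K k T = S) := by
  show (mincSat K _ T ∧ mincSat K _ T) ↔ _
  rw [mincSat_theta_aux1, mincSat_theta_aux2]
  constructor
  · rintro ⟨h1, h2⟩
    rcases Set.eq_empty_or_nonempty T with rfl | ⟨w₀, hw₀⟩
    · exact Or.inl rfl
    · refine Or.inr (Set.Subset.antisymm ?_ ?_)
      · rintro τ ⟨w, hw, rfl⟩; exact h1 w hw
      · intro τ hτ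
        obtain ⟨v, hv, hty⟩ := h2 τ hτ w₀ hw₀
        exact ⟨v, hv, hty⟩
  · rintro (rfl | rfl)
    · exact ⟨fun w hw => absurd hw (Set.notMem_empty w),
        fun τ hτ w hw => absurd hw (Set.notMem_empty w)⟩
    · refine ⟨fun w hw => ⟨w, hw, rfl⟩, ?_⟩
      rintro τ ⟨v, hv, rfl⟩ w hw
      exact ⟨v, hv, rfl⟩

end Theta

section SumModel
variable {Φ : Type}

def sumK (K₁ K₂ : KripkeModel Φ) : KripkeModel Φ where
  W := K₁.W ⊕ K₂.W
  R := fun a b => match a, b with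
    | .inl x, .inl y => K₁.R x y
    | .inr x, .inr y => K₂.R x y
    | _, _ => False
  V := fun p => Sum.inl '' K₁.V p ∪ Sum.inr '' K₂.V p

lemma ty_sum_inl (K₁ K₂ : KripkeModel Φ) :
    ∀ (k : ℕ) (w : K₁.W), ty (sumK K₁ K₂) k (.inl w) = ty K₁ k w
  | 0, w => by
      show ({p | Sum.inl w ∈ (sumK K₁ K₂).V p} : Set Φ) = {p | w ∈ K₁.V p}
      ext p
      exact ⟨fun h => by rcases h with ⟨x, hx, he⟩ | ⟨x, hx, he⟩ <;> cases he; exact hx, fun h => Or.inl ⟨w, h, rfl⟩⟩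
  | k + 1, w => by
      show (_, _) = (_, _)
      refine Prod.ext ?_ ?_
      · ext p; exact ⟨fun h => by rcases h with ⟨x, hx, he⟩ | ⟨x, hx, he⟩ <;> cases he; exact hx, fun h => Or.inl ⟨w, h, rfl⟩⟩
      · ext τ
        simp only [Set.mem_setOf_eq]
        constructor
        · rintro ⟨v', hr, rfl⟩
          rcases v' with v | v
          · exact ⟨v, hr, (ty_sum_inl K₁ K₂ k v).symm⟩
          · exact absurd hr (by simp [sumK])
        · rintro ⟨v, hr, rfl⟩
          exact ⟨.inl v, hr, ty_sum_inl K₁ K₂ k v⟩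

lemma ty_sum_inr (K₁ K₂ : KripkeModel Φ) :
    ∀ (k : ℕ) (w : K₂.W), ty (sumK K₁ K₂) k (.inr w) = ty K₂ k w
  | 0, w => by
      show ({p | Sum.inr w ∈ (sumK K₁ K₂).V p} : Set Φ) = {p | w ∈ K₂.V p}
      ext p
      exact ⟨fun h => by rcases h with ⟨x, hx, he⟩ | ⟨x, hx, he⟩ <;> cases he; exact hx, fun h => Or.inr ⟨w, h, rfl⟩⟩
  | k + 1, w => by
      show (_, _) = (_, _)
      refine Prod.ext ?_ ?_
      · ext p; exact ⟨fun h => by rcases h with ⟨x, hx, he⟩ | ⟨x, hx, he⟩ <;> cases he; exact hx, fun h => Or.inr ⟨w, h, rfl⟩⟩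
      · ext τ
        simp only [Set.mem_setOf_eq]
        constructor
        · rintro ⟨v', hr, rfl⟩
          rcases v' with v | v
          · exact absurd hr (by simp [sumK])
          · exact ⟨v, hr, (ty_sum_inr K₁ K₂ k v).symm⟩
        · rintro ⟨v, hr, rfl⟩
          exact ⟨.inr v, hr, ty_sum_inr K₁ K₂ k v⟩

lemma tyset_sum_inl (K₁ K₂ : KripkeModel Φ) (k : ℕ) (T : Set K₁.W) :
    tyset (sumK K₁ K₂) k (Sum.inl '' T) = tyset K₁ k T := by
  ext τ
  simp only [tyset, Set.mem_image]
  constructor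
  · rintro ⟨w', ⟨w, hw, rfl⟩, rfl⟩
    exact ⟨w, hw, (ty_sum_inl K₁ K₂ k w).symm⟩
  · rintro ⟨w, hw, rfl⟩
    exact ⟨.inl w, ⟨w, hw, rfl⟩, ty_sum_inl K₁ K₂ k w⟩

lemma tyset_sum_inr (K₁ K₂ : KripkeModel Φ) (k : ℕ) (T : Set K₂.W) :
    tyset (sumK K₁ K₂) k (Sum.inr '' T) = tyset K₂ k T := by
  ext τ
  simp only [tyset, Set.mem_image]
  constructor
  · rintro ⟨w', ⟨w, hw, rfl⟩, rfl⟩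
    exact ⟨w, hw, (ty_sum_inr K₁ K₂ k w).symm⟩
  · rintro ⟨w, hw, rfl⟩
    exact ⟨.inr w, ⟨w, hw, rfl⟩, ty_sum_inr K₁ K₂ k w⟩

end SumModel
/-- Characterisation of MINC-definability: a class of Φ-models with teams is definable
in MINC iff it is closed under unions, closed under team `k`-bisimulation for some `k`,
and has the empty team property. -/
theorem minc_definability_characterisation [Fintype Φ] [Nonempty Φ]
    (𝒦 : ∀ K : KripkeModel Φ, Set K.W → Prop) :
    (∃ φ : MINCFormula Φ, ∀ (K : KripkeModel Φ) (T : Set K.W), 𝒦 K T ↔ mincSat K φ T) ↔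
      ((∀ (K : KripkeModel Φ) (I : Type), Nonempty I → ∀ T : I → Set K.W,
          (∀ i, 𝒦 K (T i)) → 𝒦 K (⋃ i, T i)) ∧
       (∃ k : ℕ, ∀ (K K' : KripkeModel Φ) (T : Set K.W) (T' : Set K'.W),
          𝒦 K T → teamBisim K K' k T T' → 𝒦 K' T') ∧
       (∀ K : KripkeModel Φ, 𝒦 K (∅ : Set K.W))) := by
  constructor
  · rintro ⟨φ, hφ⟩
    refine ⟨?_, ⟨mincMd φ, ?_⟩, ?_⟩
    · intro K I _ T h
      exact (hφ K _).2 (mincSat_iUnion φ T fun i => (hφ K (T i)).1 (h i))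
    · intro K K' T T' h hb
      exact (hφ K' T').2 (mincSat_teamBisim φ le_rfl ((hφ K T).1 h) hb)
    · intro K
      exact (hφ K ∅).2 (mincSat_empty K φ)
  · rintro ⟨hu, ⟨k, hbis⟩, hemp⟩
    set S' : Set (Set (ModType Φ k)) :=
      {S | ∃ (K : KripkeModel Φ) (T : Set K.W), 𝒦 K T ∧ tyset K k T = S} with hS'
    have hempS : ∅ ∈ S' := by
      exact ⟨⟨PUnit, fun _ _ => False, fun _ => ∅⟩, ∅, hemp _, tyset_empty _ _⟩
    have hunS : ∀ S₁ ∈ S', ∀ S₂ ∈ S', S₁ ∪ S₂ ∈ S' := by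
      rintro S₁ ⟨K₁, T₁, h1, rfl⟩ S₂ ⟨K₂, T₂, h2, rfl⟩
      have m1 : 𝒦 (sumK K₁ K₂) (Sum.inl '' T₁) :=
        hbis K₁ (sumK K₁ K₂) T₁ _ h1 (teamBisim_of_tyset_eq (tyset_sum_inl K₁ K₂ k T₁).symm)
      have m2 : 𝒦 (sumK K₁ K₂) (Sum.inr '' T₂) :=
        hbis K₂ (sumK K₁ K₂) T₂ _ h2 (teamBisim_of_tyset_eq (tyset_sum_inr K₁ K₂ k T₂).symm)
      refine ⟨sumK K₁ K₂, (Sum.inl '' T₁) ∪ (Sum.inr '' T₂), ?_, ?_⟩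
      · have := hu (sumK K₁ K₂) Bool ⟨true⟩
          (fun b => if b then Sum.inl '' T₁ else Sum.inr '' T₂)
          (by rintro (_|_) <;> simp [m1, m2])
        have he : (⋃ b : Bool, if b then Sum.inl '' T₁ else Sum.inr '' T₂) =
            (Sum.inl '' T₁) ∪ (Sum.inr '' T₂) := by
          ext x
          constructor
          · intro hx
            obtain ⟨b, hb⟩ := Set.mem_iUnion.1 hx
            rcases b with _ | _
            · simp only [if_neg Bool.false_ne_true] at hb
              exact Or.inr hb
            · simp only [if_pos rfl] at hb
              exact Or.inl hb
          · rintro (hx | hx)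
            · exact Set.mem_iUnion.2 ⟨true, by simpa using hx⟩
            · exact Set.mem_iUnion.2 ⟨false, by simpa using hx⟩
        convert this using 2; exact he.symm
      · rw [show tyset (sumK K₁ K₂) k (Sum.inl '' T₁ ∪ Sum.inr '' T₂) =
            tyset (sumK K₁ K₂) k (Sum.inl '' T₁) ∪ tyset (sumK K₁ K₂) k (Sum.inr '' T₂)
          from Set.image_union _ _ _, tyset_sum_inl, tyset_sum_inr]
    have hiU : ∀ (n : ℕ) (f : Fin n → Set (ModType Φ k)), (∀ i, f i ∈ S') →
        (⋃ i, f i) ∈ S' := by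
      intro n
      induction n with
      | zero =>
          intro f _
          rw [Set.iUnion_of_empty]
          exact hempS
      | succ n ih =>
          intro f hf
          have he : (⋃ i, f i) = f 0 ∪ ⋃ i : Fin n, f i.succ := by
            ext x
            constructor
            · intro hx
              obtain ⟨i, hi⟩ := Set.mem_iUnion.1 hx
              refine Fin.cases ?_ ?_ i hi
              · intro h; exact Or.inl h
              · intro j hj; exact Or.inr (Set.mem_iUnion.2 ⟨j, hj⟩)
            · rintro (hx | hx)
              · exact Set.mem_iUnion.2 ⟨0, hx⟩
              · obtain ⟨j, hj⟩ := Set.mem_iUnion.1 hx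
                exact Set.mem_iUnion.2 ⟨j.succ, hj⟩
          rw [he]
          exact hunS _ (hf 0) _ (ih _ fun i => hf i.succ)
    refine ⟨bigOrM ((listOf S').map (theta k)), ?_⟩
    intro K T
    constructor
    · intro h
      have hSmem : tyset K k T ∈ S' := ⟨K, T, h, rfl⟩
      exact mincSat_bigOrM_of_mem (List.mem_map.2 ⟨_, mem_listOf.2 hSmem, rfl⟩)
        (mincSat_theta.2 (Or.inr rfl))
    · intro h
      obtain ⟨g, hT, hg⟩ := mincSat_bigOrM.1 h
      have hty : ∀ i, tyset K k (g i) ∈ S' := by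
        intro i
        have hgi := hg i
        rw [List.get_eq_getElem, List.getElem_map] at hgi
        rcases mincSat_theta.1 hgi with he | he
        · rw [he, tyset_empty]; exact hempS
        · rw [he]; exact mem_listOf.1 (List.getElem_mem _)
      have hmem : tyset K k T ∈ S' := by
        rw [hT, tyset_iUnion]
        exact hiU _ _ hty
      obtain ⟨K₀, T₀, h0, heq⟩ := hmem
      exact hbis K₀ K T₀ T h0 (teamBisim_of_tyset_eq heq)

end TeamSem
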